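/- Let P be a finite non-empty subset of the primes and H a finite subset of the non-negative integers. Then for every integer r ≥ 1 there exist sets X_P^H(r), Y_P^H(r) ∈ 𝒜_P with X_P^H(r) ⊆ N_P^H ⊆ Y_P^H(r), and such that lim_{r→∞} δ(X_P^H(r)) = lim_{r→∞} δ(Y_P^H(r)). Consequently, the natural density δ(N_P^H) exists. -/

import Mathlib

open Filter Topology
open scoped symmDiff Classical

/-- `Ω_P(n)`: number of prime factors of `n` (with multiplicity) lying in `P`. -/
noncomputable def OmegaP (P : Set ℕ) (n : ℕ) : ℕ :=
  n.factorization.sum fun p k => if p ∈ P then k else 0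

/-- `λ_P`, the completely multiplicative function equal to `-1` at primes in `P`
and `1` at all other primes. -/
noncomputable def lambdaP (P : Set ℕ) (n : ℕ) : ℝ :=
  (-1 : ℝ) ^ OmegaP P n

/-- `Λ_P^H(n) = ∏_{h ∈ H} λ_P(n + h)` (empty product is `1`). -/
noncomputable def LambdaPH (P : Set ℕ) (H : Finset ℕ) (n : ℕ) : ℝ :=
  ∏ h ∈ H, lambdaP P (n + h)

/-- `N_P^H = {n : Λ_P^H(n) = -1}`. -/
def NPH (P : Set ℕ) (H : Finset ℕ) : Set ℕ :=
  {n : ℕ | LambdaPH P H n = -1}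

/-- Number of elements of `A` in `[1, x]`. -/
noncomputable def countIn (A : Set ℕ) (x : ℕ) : ℕ :=
  ((Finset.Icc 1 x).filter (fun n => n ∈ A)).card

/-- `A ⊆ ℕ` has natural density `d`: `|A ∩ [1,x]|/x → d`. -/
def HasDensity (A : Set ℕ) (d : ℝ) : Prop :=
  Filter.Tendsto (fun x : ℕ => (countIn A x : ℝ) / x) Filter.atTop (nhds d)

/-- The Cesàro average `(1/x) ∑_{n ≤ x} Λ_P^H(n)`. -/
noncomputable def cesaroAvg (P : Set ℕ) (H : Finset ℕ) (x : ℕ) : ℝ :=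
  (∑ n ∈ Finset.Icc 1 x, LambdaPH P H n) / x

/-- A set of naturals is small if the sum of reciprocals of its elements converges. -/
def SmallSet (P : Set ℕ) : Prop :=
  Summable fun p : P => (1 : ℝ) / (p : ℝ)

/-- `C(r,s) = {n : n ≡ -r (mod s)}`. -/
def Cset (r s : ℕ) : Set ℕ :=
  {n : ℕ | (n : ℤ) ≡ -(r : ℤ) [ZMOD (s : ℤ)]}

/-- The set of `P`-smooth positive integers. -/
def SmoothP (P : Set ℕ) : Set ℕ :=
  {n : ℕ | 0 < n ∧ ∀ p : ℕ, p.Prime → p ∣ n → p ∈ P}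

/-- `𝒜_P`: all finite unions of sets from `{∅} ∪ {C(r,n) : r ∈ ℕ, n ∈ S_P}`. -/
def calA (P : Set ℕ) : Set (Set ℕ) :=
  {A : Set ℕ | ∃ F : Finset (ℕ × ℕ), (∀ q ∈ F, q.2 ∈ SmoothP P) ∧
    A = ⋃ q ∈ F, Cset q.1 q.2}

lemma countIn_mono {A B : Set ℕ} (h : A ⊆ B) (x : ℕ) : countIn A x ≤ countIn B x :=
  Finset.card_le_card (Finset.monotone_filter_right _ (fun n _ hn => h hn))

lemma countIn_div_mono {A B : Set ℕ} (h : A ⊆ B) (x : ℕ) :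
    (countIn A x : ℝ) / x ≤ (countIn B x : ℝ) / x := by
  rcases Nat.eq_zero_or_pos x with rfl | hx
  · simp
  · have := countIn_mono h x
    have h2 : (countIn A x : ℝ) ≤ countIn B x := by exact_mod_cast this
    gcongr

lemma periodic_iter {S : Set ℕ} {m : ℕ} (hper : ∀ n, n + m ∈ S ↔ n ∈ S) :
    ∀ n k, n + k * m ∈ S ↔ n ∈ S := by
  intro n k
  induction k with
  | zero => simp
  | succ k ih =>
    have : n + (k + 1) * m = (n + k * m) + m := by ring
    rw [this, hper, ih]

lemma block_card (S : Set ℕ) (m : ℕ) (hper : ∀ n, n + m ∈ S ↔ n ∈ S) (q : ℕ) :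
    ((Finset.Ico (1 + q * m) (1 + (q + 1) * m)).filter (fun n => n ∈ S)).card
      = countIn S m := by
  have himg : Finset.image (fun n => n + q * m) ((Finset.Ico 1 (1 + m)).filter (fun n => n ∈ S))
      = (Finset.Ico (1 + q * m) (1 + (q + 1) * m)).filter (fun n => n ∈ S) := by
    ext n
    simp only [Finset.mem_image, Finset.mem_filter, Finset.mem_Ico]
    constructor
    · rintro ⟨a, ⟨⟨h1, h2⟩, hS⟩, rfl⟩
      exact ⟨⟨by omega, by nlinarith⟩, (periodic_iter hper a q).mpr hS⟩
    · rintro ⟨⟨h1, h2⟩, hS⟩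
      have hq : q * m ≤ n := by omega
      refine ⟨n - q * m, ⟨⟨by omega, by nlinarith [Nat.sub_add_cancel hq]⟩, ?_⟩, by omega⟩
      have he : n - q * m + q * m = n := Nat.sub_add_cancel hq
      rw [← he] at hS
      exact (periodic_iter hper _ q).mp hS
  have hico : Finset.Ico 1 (1 + m) = Finset.Icc 1 m := by
    rw [add_comm, Finset.Ico_add_one_right_eq_Icc]
  rw [← himg, Finset.card_image_of_injective _ (add_left_injective _), hico]
  rfl

lemma count_mul (S : Set ℕ) (m : ℕ) (hper : ∀ n, n + m ∈ S ↔ n ∈ S) (q : ℕ) :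
    ((Finset.Ico 1 (1 + q * m)).filter (fun n => n ∈ S)).card = q * countIn S m := by
  induction q with
  | zero => simp
  | succ q ih =>
    have hsplit : Finset.Ico 1 (1 + (q + 1) * m)
        = Finset.Ico 1 (1 + q * m) ∪ Finset.Ico (1 + q * m) (1 + (q + 1) * m) := by
      rw [Finset.Ico_union_Ico_eq_Ico (by omega) (by nlinarith)]
    rw [hsplit, Finset.filter_union,
      Finset.card_union_of_disjoint
        (Finset.disjoint_filter_filter (Finset.Ico_disjoint_Ico_consecutive 1 _ _)),
      ih, block_card S m hper q]
    ring

lemma count_bounds (S : Set ℕ) (m : ℕ) (hm : 0 < m) (hper : ∀ n, n + m ∈ S ↔ n ∈ S) (x : ℕ) :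
    (x / m) * countIn S m ≤ countIn S x ∧ countIn S x ≤ (x / m + 1) * countIn S m := by
  have hd1 : (x / m) * m ≤ x := Nat.div_mul_le_self x m
  have hd2 : x < (x / m + 1) * m := by
    have h1 := Nat.div_add_mod x m
    have h2 := Nat.mod_lt x hm
    nlinarith
  constructor
  · rw [← count_mul S m hper]
    apply Finset.card_le_card
    apply Finset.monotone_filter_left
    intro n hn
    simp only [Finset.mem_Ico, Finset.mem_Icc] at *
    omega
  · rw [← count_mul S m hper (x / m + 1)]
    apply Finset.card_le_card
    apply Finset.monotone_filter_left
    intro n hn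
    simp only [Finset.mem_Ico, Finset.mem_Icc] at *
    omega

lemma hasDensity_periodic (S : Set ℕ) (m : ℕ) (hm : 0 < m) (hper : ∀ n, n + m ∈ S ↔ n ∈ S) :
    HasDensity S ((countIn S m : ℝ) / m) := by
  set c : ℝ := (countIn S m : ℝ) with hc
  have hc0 : 0 ≤ c := Nat.cast_nonneg _
  have hm' : (0 : ℝ) < m := by exact_mod_cast hm
  have est : ∀ x : ℕ, |(countIn S x : ℝ) - (c / m) * x| ≤ c := by
    intro x
    obtain ⟨hlo, hhi⟩ := count_bounds S m hm hper x
    set q : ℕ := x / m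
    have hx1 : (q : ℝ) * c ≤ (countIn S x : ℝ) := by rw [hc]; exact_mod_cast hlo
    have hx2 : (countIn S x : ℝ) ≤ ((q : ℝ) + 1) * c := by rw [hc]; exact_mod_cast hhi
    have hq1 : (q : ℝ) * m ≤ x := by exact_mod_cast Nat.div_mul_le_self x m
    have hq2 : (x : ℝ) < ((q : ℝ) + 1) * m := by
      have h1 := Nat.div_add_mod x m
      have h2 := Nat.mod_lt x hm
      have h1' : (m : ℝ) * q + ((x % m : ℕ) : ℝ) = x := by exact_mod_cast h1
      have h2' : ((x % m : ℕ) : ℝ) < m := by exact_mod_cast h2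
      nlinarith
    have e1 : (q : ℝ) * c ≤ (c / m) * x := by
      rw [div_mul_eq_mul_div, le_div_iff₀ hm']; nlinarith
    have e2 : (c / m) * x ≤ ((q : ℝ) + 1) * c := by
      rw [div_mul_eq_mul_div, div_le_iff₀ hm']; nlinarith
    rw [abs_le]; constructor <;> nlinarith
  rw [HasDensity, ← tendsto_sub_nhds_zero_iff]
  refine squeeze_zero_norm' (a := fun x : ℕ => c / x) ?_ (tendsto_const_div_atTop_nhds_zero_nat c)
  filter_upwards [eventually_ge_atTop 1] with x hx
  have hx' : (0 : ℝ) < x := by exact_mod_cast hx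
  have heq : (countIn S x : ℝ) / x - c / m = ((countIn S x : ℝ) - (c / m) * x) / x := by
    field_simp
  rw [Real.norm_eq_abs, heq, abs_div, abs_of_pos hx']
  gcongr
  exact est x

lemma hasDensity_mono {A B : Set ℕ} {a b : ℝ} (hAB : A ⊆ B)
    (hA : HasDensity A a) (hB : HasDensity B b) : a ≤ b :=
  le_of_tendsto_of_tendsto' hA hB (countIn_div_mono hAB)

lemma hasDensity_nonneg {A : Set ℕ} {a : ℝ} (hA : HasDensity A a) : 0 ≤ a :=
  le_of_tendsto_of_tendsto' tendsto_const_nhds hA (fun x => by positivity)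

lemma countIn_subadd {A B C : Set ℕ} (hC : ∀ n, n ∈ C → n ∈ A ∨ n ∈ B) (x : ℕ) :
    countIn C x ≤ countIn A x + countIn B x := by
  unfold countIn
  refine le_trans (Finset.card_le_card (fun n hn => ?_)) (Finset.card_union_le _ _)
  simp only [Finset.mem_filter, Finset.mem_union] at hn ⊢
  rcases hC n hn.2 with h | h
  · exact Or.inl ⟨hn.1, h⟩
  · exact Or.inr ⟨hn.1, h⟩

lemma countIn_union_eq {A B C : Set ℕ} (hC : ∀ n, n ∈ C ↔ (n ∈ A ∨ n ∈ B))
    (hdisj : ∀ n, n ∈ A → n ∉ B) (x : ℕ) : countIn C x = countIn A x + countIn B x := by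
  unfold countIn
  have hdisj' : Disjoint ((Finset.Icc 1 x).filter (fun n => n ∈ A))
      ((Finset.Icc 1 x).filter (fun n => n ∈ B)) :=
    Finset.disjoint_left.mpr
      (fun {n} hn hn' => hdisj n (Finset.mem_filter.mp hn).2 (Finset.mem_filter.mp hn').2)
  rw [← Finset.card_union_of_disjoint hdisj']
  congr 1
  ext n
  simp only [Finset.mem_filter, Finset.mem_union]
  constructor
  · rintro ⟨h1, h2⟩
    rcases (hC n).mp h2 with h | h
    exacts [Or.inl ⟨h1, h⟩, Or.inr ⟨h1, h⟩]
  · rintro (⟨h1, h2⟩ | ⟨h1, h2⟩) <;> exact ⟨h1, (hC n).mpr (by tauto)⟩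

lemma countIn_biUnion_le {ι : Type*} (F : Finset ι) (A : ι → Set ℕ) (x : ℕ) :
    countIn (⋃ i ∈ F, A i) x ≤ ∑ i ∈ F, countIn (A i) x := by
  induction F using Finset.induction with
  | empty => simp [countIn]
  | @insert a F ha ih =>
    rw [Finset.sum_insert ha]
    refine le_trans (countIn_subadd (B := ⋃ i ∈ F, A i) (fun n hn => ?_) x)
      (Nat.add_le_add_left ih _)
    rw [Finset.set_biUnion_insert] at hn
    exact hn

lemma cset_inv (a s : ℕ) {x y : ℕ} (h : x % s = y % s) : x ∈ Cset a s ↔ y ∈ Cset a s := by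
  have hxy : (x : ℤ) ≡ (y : ℤ) [ZMOD (s : ℤ)] := Int.natCast_modEq_iff.mpr h
  exact ⟨fun hx => hxy.symm.trans hx, fun hy => hxy.trans hy⟩

lemma countIn_cset_le_one (a s : ℕ) : countIn (Cset a s) s ≤ 1 := by
  apply Finset.card_le_one.mpr
  intro n hn n' hn'
  simp only [Finset.mem_filter, Finset.mem_Icc] at hn hn'
  obtain ⟨⟨h1, h2⟩, hc⟩ := hn
  obtain ⟨⟨h1', h2'⟩, hc'⟩ := hn'
  have hd : (s : ℤ) ∣ (n' : ℤ) - (n : ℤ) := (hc.trans hc'.symm).dvd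
  obtain ⟨k, hk⟩ := hd
  have hn1 : (1 : ℤ) ≤ n := by exact_mod_cast h1
  have hn2 : (n : ℤ) ≤ s := by exact_mod_cast h2
  have hn1' : (1 : ℤ) ≤ n' := by exact_mod_cast h1'
  have hn2' : (n' : ℤ) ≤ s := by exact_mod_cast h2'
  have hs0 : (0 : ℤ) < s := by linarith
  have hk0 : k = 0 := by
    rcases lt_trichotomy k 0 with h | h | h
    · have : (s : ℤ) * k ≤ s * (-1) := mul_le_mul_of_nonneg_left (by omega) (by omega)
      linarith
    · exact h
    · have : (s : ℤ) * 1 ≤ s * k := mul_le_mul_of_nonneg_left (by omega) (by omega)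
      linarith
  have : (n : ℤ) = n' := by rw [hk0] at hk; linarith
  exact_mod_cast this

lemma countIn_cset_le (a s y : ℕ) (hs : 0 < s) (hdvd : s ∣ y) :
    countIn (Cset a s) y ≤ y / s := by
  have hper : ∀ n, n + s ∈ Cset a s ↔ n ∈ Cset a s :=
    fun n => cset_inv a s (Nat.add_mod_right n s)
  have h1 : Finset.Icc 1 y = Finset.Ico 1 (1 + (y / s) * s) := by
    rw [Nat.div_mul_cancel hdvd, add_comm, Finset.Ico_add_one_right_eq_Icc]
  calc countIn (Cset a s) y
      = (y / s) * countIn (Cset a s) s := by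
        unfold countIn; rw [h1, count_mul _ _ hper]; rfl
    _ ≤ (y / s) * 1 := Nat.mul_le_mul_left _ (countIn_cset_le_one a s)
    _ = y / s := Nat.mul_one _

lemma mem_calA_of_inv {P : Set ℕ} {S : Set ℕ} {m : ℕ} (hm : 0 < m) (hsm : m ∈ SmoothP P)
    (hinv : ∀ x y : ℕ, x % m = y % m → (x ∈ S ↔ y ∈ S)) : S ∈ calA P := by
  refine ⟨((Finset.range m).filter (fun c => c ∈ S)).image (fun c => (m - c, m)), ?_, ?_⟩
  · intro q hq
    simp only [Finset.mem_image, Finset.mem_filter, Finset.mem_range] at hq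
    obtain ⟨c, _, rfl⟩ := hq
    exact hsm
  · ext n
    simp only [Set.mem_iUnion, Finset.mem_image, Finset.mem_filter, Finset.mem_range,
      Prod.exists]
    constructor
    · intro hn
      set c := n % m with hcdef
      have hc : c < m := Nat.mod_lt n hm
      have hcS : c ∈ S := (hinv n c (by simp [hcdef, Nat.mod_mod_of_dvd n dvd_rfl])).mp hn
      refine ⟨m - c, m, ⟨⟨c, ⟨hc, hcS⟩, rfl⟩, ?_⟩⟩
      show (n : ℤ) ≡ -((m - c : ℕ) : ℤ) [ZMOD (m : ℤ)]
      have hnm : n = m * (n / m) + c := (Nat.div_add_mod n m).symm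
      have h1 : ((m * (n / m) + c : ℕ) : ℤ) = (n : ℤ) := by exact_mod_cast hnm.symm
      have hsub : ((m - c : ℕ) : ℤ) = (m : ℤ) - c := by
        rw [Nat.cast_sub hc.le]
      have hd : (m : ℤ) ∣ (n : ℤ) - (-((m - c : ℕ) : ℤ)) := by
        rw [hsub]
        refine ⟨(n / m : ℕ) + 1, ?_⟩
        push_cast at h1 ⊢
        linarith
      exact (Int.modEq_iff_dvd.mpr hd).symm
    · rintro ⟨a, b, ⟨c, ⟨hc, hcS⟩, heq⟩, hn⟩
      injection heq with h1e h2e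
      subst h1e
      subst h2e
      have hd : (m : ℤ) ∣ (-((m - c : ℕ) : ℤ)) - n := Int.ModEq.dvd hn
      have hsub : ((m - c : ℕ) : ℤ) = (m : ℤ) - c := Nat.cast_sub hc.le
      have hd2 : (m : ℤ) ∣ (c : ℤ) - n := by
        obtain ⟨k, hk⟩ := hd
        rw [hsub] at hk
        exact ⟨k + 1, by have := mul_add (m : ℤ) k 1; have := mul_one (m : ℤ); linarith⟩
      have hmod : n % m = c % m := by
        have hme : (n : ℤ) ≡ (c : ℤ) [ZMOD (m : ℤ)] := Int.modEq_iff_dvd.mpr hd2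
        exact Int.natCast_modEq_iff.mp hme
      exact (hinv n c hmod).mpr hcS

lemma calA_union {P : Set ℕ} {A B : Set ℕ} (hA : A ∈ calA P) (hB : B ∈ calA P) :
    A ∪ B ∈ calA P := by
  obtain ⟨F1, hF1, rfl⟩ := hA
  obtain ⟨F2, hF2, rfl⟩ := hB
  refine ⟨F1 ∪ F2, fun q hq => ?_, ?_⟩
  · rcases Finset.mem_union.mp hq with h | h
    exacts [hF1 q h, hF2 q h]
  · rw [Finset.set_biUnion_union]

lemma omegaP_eq (P : Set ℕ) (hfin : P.Finite) (n : ℕ) :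
    OmegaP P n = ∑ p ∈ hfin.toFinset, n.factorization p := by
  rw [OmegaP, Finsupp.sum, ← Finset.sum_filter]
  apply Finset.sum_subset
  · intro p hp
    rw [Set.Finite.mem_toFinset]
    exact (Finset.mem_filter.mp hp).2
  · intro p hp hnp
    rw [Finsupp.notMem_support_iff.mp]
    intro hmem
    exact hnp (Finset.mem_filter.mpr ⟨hmem, (Set.Finite.mem_toFinset hfin).mp hp⟩)

lemma fact_eq {p r : ℕ} (hp : p.Prime) {a b : ℕ} (hmod : a % p ^ r = b % p ^ r)
    (ha : ¬ p ^ r ∣ a) (hb : ¬ p ^ r ∣ b) : a.factorization p = b.factorization p := by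
  have ha0 : a ≠ 0 := by rintro rfl; exact ha (dvd_zero _)
  have hb0 : b ≠ 0 := by rintro rfl; exact hb (dvd_zero _)
  have key : ∀ k, k ≤ r → (p ^ k ∣ a ↔ p ^ k ∣ b) := by
    intro k hk
    have h1 : a % p ^ k = b % p ^ k := by
      rw [← Nat.mod_mod_of_dvd a (pow_dvd_pow p hk), ← Nat.mod_mod_of_dvd b (pow_dvd_pow p hk),
        hmod]
    rw [Nat.dvd_iff_mod_eq_zero, Nat.dvd_iff_mod_eq_zero, h1]
  have hva : a.factorization p < r := by
    by_contra h
    exact ha ((Nat.Prime.pow_dvd_iff_le_factorization hp ha0).mpr (le_of_not_gt h))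
  have hvb : b.factorization p < r := by
    by_contra h
    exact hb ((Nat.Prime.pow_dvd_iff_le_factorization hp hb0).mpr (le_of_not_gt h))
  have h1 : a.factorization p ≤ b.factorization p := by
    rw [← Nat.Prime.pow_dvd_iff_le_factorization hp hb0]
    exact (key _ hva.le).mp ((Nat.Prime.pow_dvd_iff_le_factorization hp ha0).mpr le_rfl)
  have h2 : b.factorization p ≤ a.factorization p := by
    rw [← Nat.Prime.pow_dvd_iff_le_factorization hp ha0]
    exact (key _ hvb.le).mpr ((Nat.Prime.pow_dvd_iff_le_factorization hp hb0).mpr le_rfl)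
  omega

/-- For a finite non-empty set `P` of primes and finite `H`, there are
approximating sets `X_P^H(r) ⊆ N_P^H ⊆ Y_P^H(r)` in `𝒜_P` whose densities converge to a
common limit; consequently `δ(N_P^H)` exists (and equals that limit). -/
theorem stmt_12 (P : Set ℕ) (hP : ∀ q ∈ P, Nat.Prime q) (hfin : P.Finite)
    (hne : P.Nonempty) (H : Finset ℕ) :
    ∃ (X Y : ℕ → Set ℕ) (dX dY : ℕ → ℝ) (L : ℝ),
      (∀ r : ℕ, 1 ≤ r →
        X r ∈ calA P ∧ Y r ∈ calA P ∧
        X r ⊆ NPH P H ∧ NPH P H ⊆ Y r ∧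
        HasDensity (X r) (dX r) ∧ HasDensity (Y r) (dY r)) ∧
      Filter.Tendsto dX Filter.atTop (nhds L) ∧
      Filter.Tendsto dY Filter.atTop (nhds L) ∧
      HasDensity (NPH P H) L := by
  classical
  set m0 : ℕ := ∏ p ∈ hfin.toFinset, p with hm0def
  have hm0 : 0 < m0 := Finset.prod_pos (fun p hp => (hP p (hfin.mem_toFinset.mp hp)).pos)
  set M : ℕ → ℕ := fun r => m0 ^ r with hMdef
  have hM : ∀ r, 0 < M r := fun r => pow_pos hm0 r
  have hdvd : ∀ r p, p ∈ hfin.toFinset → p ^ r ∣ M r :=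
    fun r p hp => pow_dvd_pow_of_dvd (Finset.dvd_prod_of_mem _ hp) r
  have hsm : ∀ r, M r ∈ SmoothP P := by
    intro r
    refine ⟨hM r, fun q hq hqd => ?_⟩
    have h1 : q ∣ m0 := hq.dvd_of_dvd_pow hqd
    obtain ⟨p, hp, hqp⟩ := hq.prime.exists_mem_finset_dvd h1
    have hpP : p ∈ P := hfin.mem_toFinset.mp hp
    rwa [(Nat.prime_dvd_prime_iff_eq hq (hP p hpP)).mp hqp]
  set E : ℕ → Set ℕ := fun r => {n | ∃ h ∈ H, ∃ p ∈ hfin.toFinset, p ^ r ∣ n + h} with hEdef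
  set X : ℕ → Set ℕ := fun r => {n | n ∉ E r ∧ LambdaPH P H n = -1} with hXdef
  have hmodtrans : ∀ (r : ℕ) (x y : ℕ), x % M r = y % M r → ∀ h p, p ∈ hfin.toFinset →
      (x + h) % p ^ r = (y + h) % p ^ r := by
    intro r x y hxy h p hp
    have h1 : (x + h) % M r = (y + h) % M r := by
      rw [Nat.add_mod, hxy, ← Nat.add_mod]
    calc (x + h) % p ^ r = ((x + h) % M r) % p ^ r := (Nat.mod_mod_of_dvd _ (hdvd r p hp)).symm
      _ = ((y + h) % M r) % p ^ r := by rw [h1]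
      _ = (y + h) % p ^ r := Nat.mod_mod_of_dvd _ (hdvd r p hp)
  have hinvE1 : ∀ (r : ℕ) (x y : ℕ), x % M r = y % M r → x ∈ E r → y ∈ E r := by
    rintro r x y hxy ⟨h, hh, p, hp, hdv⟩
    refine ⟨h, hh, p, hp, ?_⟩
    rw [Nat.dvd_iff_mod_eq_zero] at hdv ⊢
    rw [← hmodtrans r x y hxy h p hp]
    exact hdv
  have hinvE : ∀ (r : ℕ) (x y : ℕ), x % M r = y % M r → (x ∈ E r ↔ y ∈ E r) :=
    fun r x y hxy => ⟨hinvE1 r x y hxy, hinvE1 r y x hxy.symm⟩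
  have hLam : ∀ (r : ℕ) (x y : ℕ), x % M r = y % M r → x ∉ E r → y ∉ E r →
      LambdaPH P H x = LambdaPH P H y := by
    intro r x y hxy hxE hyE
    unfold LambdaPH
    apply Finset.prod_congr rfl
    intro h hh
    unfold lambdaP
    congr 1
    rw [omegaP_eq P hfin, omegaP_eq P hfin]
    apply Finset.sum_congr rfl
    intro p hp
    have hpprime := hP p (hfin.mem_toFinset.mp hp)
    apply fact_eq hpprime (hmodtrans r x y hxy h p hp)
    · intro hc; exact hxE ⟨h, hh, p, hp, hc⟩
    · intro hc; exact hyE ⟨h, hh, p, hp, hc⟩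
  have hinvX1 : ∀ (r : ℕ) (x y : ℕ), x % M r = y % M r → x ∈ X r → y ∈ X r := by
    rintro r x y hxy ⟨hxE, hxL⟩
    have hyE : y ∉ E r := fun hy => hxE ((hinvE r x y hxy).mpr hy)
    exact ⟨hyE, by rw [← hLam r x y hxy hxE hyE]; exact hxL⟩
  have hinvX : ∀ (r : ℕ) (x y : ℕ), x % M r = y % M r → (x ∈ X r ↔ y ∈ X r) :=
    fun r x y hxy => ⟨hinvX1 r x y hxy, hinvX1 r y x hxy.symm⟩
  set dX : ℕ → ℝ := fun r => (countIn (X r) (M r) : ℝ) / M r with hdXdef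
  set dE : ℕ → ℝ := fun r => (countIn (E r) (M r) : ℝ) / M r with hdEdef
  have hdX : ∀ r, HasDensity (X r) (dX r) := fun r =>
    hasDensity_periodic _ _ (hM r) (fun n => hinvX r _ _ (Nat.add_mod_right n (M r)))
  have hdE : ∀ r, HasDensity (E r) (dE r) := fun r =>
    hasDensity_periodic _ _ (hM r) (fun n => hinvE r _ _ (Nat.add_mod_right n (M r)))
  have hXE : ∀ r n, n ∈ X r → n ∉ E r := fun r n hn => hn.1
  have hcountY : ∀ (r x : ℕ), countIn (X r ∪ E r) x = countIn (X r) x + countIn (E r) x :=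
    fun r x => countIn_union_eq (fun n => Iff.rfl) (hXE r) x
  have hdY : ∀ r, HasDensity (X r ∪ E r) (dX r + dE r) := by
    intro r
    have h1 := (hdX r).add (hdE r)
    exact Filter.Tendsto.congr (fun x => by rw [hcountY r x]; push_cast; ring) h1
  have hXN : ∀ r, X r ⊆ NPH P H := fun r n hn => hn.2
  have hNY : ∀ r, NPH P H ⊆ X r ∪ E r := by
    intro r n hn
    by_cases hE : n ∈ E r
    · exact Or.inr hE
    · exact Or.inl ⟨hE, hn⟩
  have hXA : ∀ r, X r ∈ calA P := fun r => mem_calA_of_inv (hM r) (hsm r) (hinvX r)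
  have hEA : ∀ r, E r ∈ calA P := fun r => mem_calA_of_inv (hM r) (hsm r) (hinvE r)
  have hYA : ∀ r, X r ∪ E r ∈ calA P := fun r => calA_union (hXA r) (hEA r)
  set K : ℝ := (H.card : ℝ) * (hfin.toFinset.card : ℝ) with hKdef
  have hEb : ∀ r, dE r ≤ K * (1 / 2) ^ r := by
    intro r
    have hsub : E r ⊆ ⋃ q ∈ H ×ˢ hfin.toFinset, Cset q.1 (q.2 ^ r) := by
      rintro n ⟨h, hh, p, hp, hdv⟩
      refine Set.mem_biUnion
        (show ((h, p) : ℕ × ℕ) ∈ H ×ˢ hfin.toFinset from Finset.mem_product.mpr ⟨hh, hp⟩) ?_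
      show (n : ℤ) ≡ -((h : ℕ) : ℤ) [ZMOD ((p ^ r : ℕ) : ℤ)]
      rw [Int.modEq_iff_dvd]
      have hz : ((p ^ r : ℕ) : ℤ) ∣ ((n + h : ℕ) : ℤ) := Int.natCast_dvd_natCast.mpr hdv
      have h2 : (-((h : ℕ) : ℤ)) - n = -(((n + h : ℕ)) : ℤ) := by push_cast; ring
      rw [h2]
      exact dvd_neg.mpr hz
    have hcnt : countIn (E r) (M r) ≤ ∑ q ∈ H ×ˢ hfin.toFinset, countIn (Cset q.1 (q.2 ^ r)) (M r) :=
      le_trans (countIn_mono hsub (M r)) (countIn_biUnion_le _ _ _)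
    have hterm : ∀ q ∈ H ×ˢ hfin.toFinset,
        (countIn (Cset q.1 (q.2 ^ r)) (M r) : ℝ) ≤ (M r : ℝ) / 2 ^ r := by
      intro q hq
      obtain ⟨hq1, hq2⟩ := Finset.mem_product.mp hq
      have hpp := hP q.2 (hfin.mem_toFinset.mp hq2)
      have hppos : 0 < q.2 ^ r := pow_pos hpp.pos r
      have h1 : countIn (Cset q.1 (q.2 ^ r)) (M r) ≤ M r / q.2 ^ r :=
        countIn_cset_le _ _ _ hppos (hdvd r q.2 hq2)
      have h2 : ((M r / q.2 ^ r : ℕ) : ℝ) ≤ (M r : ℝ) / ((q.2 : ℝ) ^ r) := by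
        have := Nat.cast_div_le (m := M r) (n := q.2 ^ r) (α := ℝ)
        push_cast at this
        exact this
      have h3 : (M r : ℝ) / ((q.2 : ℝ) ^ r) ≤ (M r : ℝ) / 2 ^ r := by
        have h2le : (2 : ℝ) ≤ (q.2 : ℝ) := by exact_mod_cast hpp.two_le
        gcongr
      calc (countIn (Cset q.1 (q.2 ^ r)) (M r) : ℝ) ≤ ((M r / q.2 ^ r : ℕ) : ℝ) := by
            exact_mod_cast h1
        _ ≤ (M r : ℝ) / ((q.2 : ℝ) ^ r) := h2
        _ ≤ (M r : ℝ) / 2 ^ r := h3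
    have hsum : (countIn (E r) (M r) : ℝ) ≤ K * ((M r : ℝ) / 2 ^ r) := by
      calc (countIn (E r) (M r) : ℝ)
          ≤ ∑ q ∈ H ×ˢ hfin.toFinset, (countIn (Cset q.1 (q.2 ^ r)) (M r) : ℝ) := by
            exact_mod_cast hcnt
        _ ≤ ∑ _q ∈ H ×ˢ hfin.toFinset, (M r : ℝ) / 2 ^ r := Finset.sum_le_sum hterm
        _ = ((H ×ˢ hfin.toFinset).card : ℝ) * ((M r : ℝ) / 2 ^ r) := by
            rw [Finset.sum_const, nsmul_eq_mul]
        _ = K * ((M r : ℝ) / 2 ^ r) := by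
            rw [Finset.card_product, hKdef]; push_cast; ring
    have hMpos : (0 : ℝ) < M r := by exact_mod_cast hM r
    show (countIn (E r) (M r) : ℝ) / M r ≤ K * (1 / 2) ^ r
    rw [div_le_iff₀ hMpos]
    calc (countIn (E r) (M r) : ℝ) ≤ K * ((M r : ℝ) / 2 ^ r) := hsum
      _ = K * (1 / 2) ^ r * M r := by
          rw [div_pow]
          field_simp
          simp
  have hE0 : ∀ r, 0 ≤ dE r := fun r => by positivity
  have hgeo : Filter.Tendsto (fun r : ℕ => K * (1 / 2) ^ r) Filter.atTop (nhds 0) := by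
    have h1 := tendsto_pow_atTop_nhds_zero_of_lt_one
      (by norm_num : (0 : ℝ) ≤ 1 / 2) (by norm_num : (1 : ℝ) / 2 < 1)
    simpa using h1.const_mul K
  have hEtend : Filter.Tendsto dE Filter.atTop (nhds 0) := squeeze_zero hE0 hEb hgeo
  have hkey : ∀ r s, dX r ≤ dX s + dE s :=
    fun r s => hasDensity_mono ((hXN r).trans (hNY s)) (hdX r) (hdY s)
  have hC : CauchySeq dX := by
    rw [Metric.cauchySeq_iff']
    intro ε hε
    obtain ⟨N, hN⟩ := (Metric.tendsto_atTop.mp hEtend) ε hε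
    refine ⟨N, fun n hn => ?_⟩
    have h1 := hkey n N
    have h2 := hkey N n
    have h3 : dE N < ε := by
      have := hN N le_rfl
      rwa [Real.dist_eq, sub_zero, abs_of_nonneg (hE0 N)] at this
    have h4 : dE n < ε := by
      have := hN n hn
      rwa [Real.dist_eq, sub_zero, abs_of_nonneg (hE0 n)] at this
    rw [Real.dist_eq, abs_sub_lt_iff]
    constructor <;> linarith
  obtain ⟨L, hL⟩ := cauchySeq_tendsto_of_complete hC
  have hYL : Filter.Tendsto (fun r => dX r + dE r) Filter.atTop (nhds L) := by
    simpa using hL.add hEtend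
  have hNL : HasDensity (NPH P H) L := by
    rw [HasDensity, Metric.tendsto_atTop]
    intro ε hε
    have e1 : ∀ᶠ r in Filter.atTop, dist (dX r) L < ε / 4 :=
      Metric.tendsto_nhds.mp hL (ε / 4) (by positivity)
    have e2 : ∀ᶠ r in Filter.atTop, dist (dE r) 0 < ε / 4 :=
      Metric.tendsto_nhds.mp hEtend (ε / 4) (by positivity)
    obtain ⟨r, hr1, hr2⟩ := (e1.and e2).exists
    rw [Real.dist_eq, abs_sub_lt_iff] at hr1
    rw [Real.dist_eq, sub_zero, abs_of_nonneg (hE0 r)] at hr2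
    obtain ⟨x1, hx1⟩ := Metric.tendsto_atTop.mp (hdX r) (ε / 4) (by positivity)
    obtain ⟨x2, hx2⟩ := Metric.tendsto_atTop.mp (hdY r) (ε / 4) (by positivity)
    refine ⟨max x1 x2, fun x hx => ?_⟩
    have hxx1 := hx1 x (le_trans (le_max_left _ _) hx)
    have hxx2 := hx2 x (le_trans (le_max_right _ _) hx)
    rw [Real.dist_eq, abs_sub_lt_iff] at hxx1 hxx2
    have hm1 : (countIn (X r) x : ℝ) / x ≤ (countIn (NPH P H) x : ℝ) / x :=
      countIn_div_mono (hXN r) x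
    have hm2 : (countIn (NPH P H) x : ℝ) / x ≤ (countIn (X r ∪ E r) x : ℝ) / x :=
      countIn_div_mono (hNY r) x
    rw [Real.dist_eq, abs_sub_lt_iff]
    constructor <;> linarith
  refine ⟨X, fun r => X r ∪ E r, dX, fun r => dX r + dE r, L, ?_, hL, hYL, hNL⟩
  intro r _
  exact ⟨hXA r, hYA r, hXN r, hNY r, hdX r, hdY r⟩
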